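/- arXiv:1701.08390 — 5 statements merged into one kernel-verified Lean document; each statement's English description precedes it below -/
import Mathlib

section
/- Let A be a real m×m matrix with nonpositive off-diagonal entries, zero row sums, and irreducible. Then the image of A contains no vector with all components strictly positive, and no vector with all components strictly negative. In particular, Im(A) ∩ ker(A) = {0}. -/
lemma mulVec_eq_sum_sub {m : ℕ} (A : Matrix (Fin m) (Fin m) ℝ)
    (hrow : ∀ i, ∑ j, A i j = 0) (v : Fin m → ℝ) (i : Fin m) :
    A.mulVec v i = ∑ j, A i j * (v j - v i) := by
  have : ∑ j, A i j * (v j - v i) = (∑ j, A i j * v j) - (∑ j, A i j) * v i := by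
    rw [Finset.sum_mul, ← Finset.sum_sub_distrib]
    simp [mul_sub]
  rw [this, hrow i, Matrix.mulVec, dotProduct]
  ring

lemma at_min_nonpos {m : ℕ} (A : Matrix (Fin m) (Fin m) ℝ)
    (hoff : ∀ i j, i ≠ j → A i j ≤ 0)
    (hrow : ∀ i, ∑ j, A i j = 0) (v : Fin m → ℝ) (i : Fin m)
    (hi : ∀ j, v i ≤ v j) : A.mulVec v i ≤ 0 := by
  rw [mulVec_eq_sum_sub A hrow]
  apply Finset.sum_nonpos
  intro j _
  rcases eq_or_ne i j with rfl | hne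
  · simp
  · have h1 := hoff i j hne
    have h2 : 0 ≤ v j - v i := sub_nonneg.mpr (hi j)
    nlinarith

/-- For an m×m real matrix with nonpositive off-diagonal entries,
zero row sums, and irreducible, the image contains no strictly positive vector and no
strictly negative vector, and Im(A) ∩ ker(A) = {0}. -/
theorem image_no_positive_vector {m : ℕ} (hm : 2 ≤ m)
    (A : Matrix (Fin m) (Fin m) ℝ)
    (hoff : ∀ i j, i ≠ j → A i j ≤ 0)
    (hrow : ∀ i, ∑ j, A i j = 0)
    (hirr : ∀ W : Finset (Fin m), W.Nonempty → W ≠ Finset.univ →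
      ∃ i ∈ W, ∃ j ∉ W, A i j < 0) :
    (¬ ∃ v : Fin m → ℝ, ∀ i, 0 < A.mulVec v i) ∧
    (¬ ∃ v : Fin m → ℝ, ∀ i, A.mulVec v i < 0) ∧
    LinearMap.range A.mulVecLin ⊓ LinearMap.ker A.mulVecLin = ⊥ := by
  have hm0 : 0 < m := by omega
  haveI : Nonempty (Fin m) := ⟨⟨0, hm0⟩⟩
  have nopos : ¬ ∃ v : Fin m → ℝ, ∀ i, 0 < A.mulVec v i := by
    rintro ⟨v, hv⟩
    obtain ⟨i, -, hi⟩ := Finset.exists_min_image Finset.univ v Finset.univ_nonempty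
    have := at_min_nonpos A hoff hrow v i (fun j => hi j (Finset.mem_univ j))
    exact absurd (hv i) (not_lt.mpr this)
  have noneg : ¬ ∃ v : Fin m → ℝ, ∀ i, A.mulVec v i < 0 := by
    rintro ⟨v, hv⟩
    obtain ⟨i, -, hi⟩ := Finset.exists_max_image Finset.univ v Finset.univ_nonempty
    have hmin : ∀ j, (-v) i ≤ (-v) j := fun j => neg_le_neg (hi j (Finset.mem_univ j))
    have := at_min_nonpos A hoff hrow (-v) i hmin
    rw [Matrix.mulVec_neg] at this
    have : 0 ≤ A.mulVec v i := by simpa using this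
    exact absurd (hv i) (not_lt.mpr this)
  refine ⟨nopos, noneg, ?_⟩
  rw [eq_bot_iff]
  rintro x ⟨hx1, hx2⟩
  obtain ⟨v, rfl⟩ := hx1
  rw [Matrix.mulVecLin_apply] at *
  set x := A.mulVec v with hxdef
  have hker : A.mulVec x = 0 := hx2
  -- x is constant
  obtain ⟨i0, -, hi0⟩ := Finset.exists_max_image Finset.univ x Finset.univ_nonempty
  set c := x i0 with hc
  have hconst : ∀ j, x j = c := by
    by_contra hne
    push_neg at hne
    set W : Finset (Fin m) := Finset.univ.filter (fun j => x j = c) with hW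
    have hWne : W.Nonempty := ⟨i0, by simp [hW, hc]⟩
    have hWnu : W ≠ Finset.univ := by
      obtain ⟨j, hj⟩ := hne
      intro h
      have : j ∈ W := h ▸ Finset.mem_univ j
      exact hj (by simpa [hW] using this)
    obtain ⟨i, hiW, j, hjW, hAij⟩ := hirr W hWne hWnu
    have hxi : x i = c := by simpa [hW] using hiW
    have hxj : x j < c := by
      have h1 : x j ≤ c := hi0 j (Finset.mem_univ j)
      have h2 : x j ≠ c := by simpa [hW] using hjW
      exact lt_of_le_of_ne h1 h2
    have hlt : 0 < A.mulVec x i := by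
      rw [mulVec_eq_sum_sub A hrow]
      have : ∑ k : Fin m, (0 : ℝ) < ∑ k, A i k * (x k - x i) := by
        apply Finset.sum_lt_sum
        · intro k _
          rcases eq_or_ne i k with rfl | hne'
          · simp
          · have h1 := hoff i k hne'
            have h2 : 0 ≤ x i - x k := by
              rw [hxi]; linarith [hi0 k (Finset.mem_univ k)]
            nlinarith
        · refine ⟨j, Finset.mem_univ j, ?_⟩
          have : 0 < x i - x j := by rw [hxi]; linarith
          nlinarith
      simpa using this
    rw [hker] at hlt
    exact absurd hlt (by simp)
  -- now x = c everywhere, A.mulVec v = x, c must be 0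
  have hc0 : c = 0 := by
    rcases lt_trichotomy c 0 with h | h | h
    · exact absurd ⟨v, fun i => by rw [show A.mulVec v i = c from hconst i]; exact h⟩ noneg
    · exact h
    · exact absurd ⟨v, fun i => by rw [show A.mulVec v i = c from hconst i]; exact h⟩ nopos
  have : x = 0 := funext fun j => by simp [hconst j, hc0]
  simp [this]
end

section
/- Let Im(A) ⊂ ℝ^m be a linear subspace of dimension m−1 such that Im(A) ∩ ℝ^m_+ = {0}, where ℝ^m_+ is the set of vectors with all components nonnegative. Then every nonzero vector orthogonal to Im(A) has either all components strictly positive or all components strictly negative. -/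
/-- If V ⊆ ℝ^m is a subspace of dimension m−1 meeting the nonnegative
orthant only at 0, then every nonzero vector orthogonal to V has either all components
strictly positive or all components strictly negative. -/
theorem orthogonal_vector_signed {m : ℕ}
    (V : Submodule ℝ (Fin m → ℝ))
    (hdim : Module.finrank ℝ V = m - 1)
    (hpos : ∀ v ∈ V, (∀ i, 0 ≤ v i) → v = 0)
    (w : Fin m → ℝ) (hw : w ≠ 0)
    (horth : ∀ v ∈ V, ∑ i, w i * v i = 0) :
    (∀ i, 0 < w i) ∨ (∀ i, w i < 0) := by
  -- the linear functional v ↦ ∑ w i * v i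
  set f : (Fin m → ℝ) →ₗ[ℝ] ℝ :=
    { toFun := fun v => ∑ i, w i * v i
      map_add' := by
        intro x y
        simp [mul_add, Finset.sum_add_distrib]
      map_smul' := by
        intro c x
        simp [Finset.mul_sum]
        ring_nf
        simp [mul_comm, mul_left_comm] } with hf
  have hfe : ∀ i, f (Pi.single i 1) = w i := by
    intro i
    simp [hf, Pi.single_apply, mul_ite, Finset.sum_ite_eq']
  -- f ≠ 0
  have hfne : f ≠ 0 := by
    intro h
    apply hw
    funext i
    have := hfe i
    rw [h] at this
    simpa using this.symm
  have hVle : V ≤ LinearMap.ker f := by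
    intro v hv
    simpa [hf] using horth v hv
  have hkerlt : Module.finrank ℝ (LinearMap.ker f) < m := by
    have hne : LinearMap.ker f < ⊤ :=
      lt_top_iff_ne_top.mpr (fun h => hfne (LinearMap.ker_eq_top.mp h))
    have := Submodule.finrank_lt (s := LinearMap.ker f) hne.ne
    simpa [Module.finrank_fin_fun] using this
  have hVeq : V = LinearMap.ker f := by
    apply Submodule.eq_of_le_of_finrank_le hVle
    rw [hdim]
    exact Nat.le_pred_of_lt hkerlt
  have hmem : ∀ u : Fin m → ℝ, (∑ i, w i * u i) = 0 → u ∈ V := by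
    intro u hu
    rw [hVeq]
    simpa [hf] using hu
  -- every component is nonzero
  have hne : ∀ i, w i ≠ 0 := by
    intro i h0
    have hmemi : Pi.single i (1:ℝ) ∈ V := by
      apply hmem
      simp only [Pi.single_apply, mul_ite, mul_one, mul_zero, Finset.sum_ite_eq',
        Finset.mem_univ, if_true]
      exact h0
    have := hpos _ hmemi (by
      intro j
      rcases eq_or_ne j i with rfl | hji
      · simp
      · simp [Pi.single_apply, hji])
    have h1 := congrFun this i
    simp at h1
  -- no two components of opposite sign
  have hsign : ∀ i j, 0 < w i → w j < 0 → False := by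
    intro i j hi hj
    have hij : i ≠ j := by
      intro h; rw [h] at hi; linarith
    set v : Fin m → ℝ := fun k =>
      (-w j) * (Pi.single i 1 : Fin m → ℝ) k + w i * (Pi.single j 1 : Fin m → ℝ) k with hv
    have hvV : v ∈ V := by
      apply hmem
      simp only [hv, Pi.single_apply, mul_ite, mul_one, mul_zero, mul_add,
        Finset.sum_add_distrib, Finset.mul_sum, ite_mul, zero_mul,
        Finset.sum_ite_eq', Finset.mem_univ, if_true]
      ring
    have hv0 : v = 0 := by
      apply hpos _ hvV
      intro k
      rcases eq_or_ne k i with rfl | hki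
      · simp [hv, Pi.single_apply, hij]
        nlinarith
      · rcases eq_or_ne k j with rfl | hkj
        · simp [hv, Pi.single_apply, hki]
          nlinarith
        · simp [hv, Pi.single_apply, hki, hkj]
    have h2 := congrFun hv0 i
    simp [hv, Pi.single_apply, hij] at h2
    nlinarith
  -- conclude
  rcases Nat.eq_zero_or_pos m with hm | hm
  · exfalso
    apply hw
    funext i
    exact absurd i.2 (by omega)
  · have i0 : Fin m := ⟨0, hm⟩
    rcases lt_or_gt_of_ne (hne i0) with h0 | h0
    · right
      intro i
      rcases lt_trichotomy (w i) 0 with h | h | h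
      · exact h
      · exact absurd h (hne i)
      · exact absurd (hsign i i0 h h0) (by simp)
    · left
      intro i
      rcases lt_trichotomy (w i) 0 with h | h | h
      · exact absurd (hsign i0 i h0 h) (by simp)
      · exact absurd h (hne i)
      · exact h
end

section
/- Let f : ℝ^N → ℝ be locally Lipschitz and η : (−∞,0] → ℝ^N absolutely continuous. Let s be a point where both t ↦ f(η(t)) and t ↦ η(t) are differentiable. Then there exists p in the Clarke generalized gradient ∂f(η(s)) such that (d/dt) f(η(t))|_{t=s} = p · η̇(s). -/
open Set MeasureTheory Filter Topology

noncomputable section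

/-- Euclidean space ℝ^N. -/
abbrev E (N : ℕ) := EuclideanSpace ℝ (Fin N)
/-- The dual of ℝ^N, representing momentum variables p (acting by p · q). -/
abbrev Dual (N : ℕ) := E N →L[ℝ] ℝ

variable {N : ℕ}

/-- ℤ^N-periodicity: a function on ℝ^N descends to the flat torus 𝕋^N. -/
def ZPer {α : Type*} (f : E N → α) : Prop :=
  ∀ (x : E N) (k : Fin N → ℤ), f (x + (EuclideanSpace.equiv (Fin N) ℝ).symm fun i => (k i : ℝ)) = f x

/-- The Clarke generalized gradient of f at x. -/
def clarke (f : E N → ℝ) (x : E N) : Set (Dual N) :=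
  convexHull ℝ {p | ∃ u : ℕ → E N, (∀ n, DifferentiableAt ℝ f (u n)) ∧
    Tendsto u atTop (𝓝 x) ∧ Tendsto (fun n => fderiv ℝ f (u n)) atTop (𝓝 p)}

/-- The viscosity superdifferential D⁺f(x): differentials of C¹ functions supertangent to f at x. -/
def Dplus (f : E N → ℝ) (x : E N) : Set (Dual N) :=
  {p | ∃ φ : E N → ℝ, ContDiff ℝ 1 φ ∧ φ x = f x ∧ (∀ᶠ y in 𝓝 x, f y ≤ φ y) ∧ fderiv ℝ φ x = p}

/-- The viscosity subdifferential D⁻f(x): differentials of C¹ functions subtangent to f at x. -/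
def Dminus (f : E N → ℝ) (x : E N) : Set (Dual N) :=
  {p | ∃ φ : E N → ℝ, ContDiff ℝ 1 φ ∧ φ x = f x ∧ (∀ᶠ y in 𝓝 x, φ y ≤ f y) ∧ fderiv ℝ φ x = p}

lemma growth_lemma (g : ℝ → ℝ) (a b M : ℝ) (hab : a ≤ b) (C : NNReal)
    (hg : LipschitzOnWith C g (Set.Icc a b))
    (hae : ∀ᵐ t, t ∈ Set.Ioo a b → DifferentiableAt ℝ g t ∧ deriv g t ≤ M) :
    g b - g a ≤ M * (b - a) := by
  set C' : ℝ := (C : ℝ) + |M| + 1 with hC'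
  have hC'pos : 0 < C' := by positivity
  have key : ∀ ε : ℝ, 0 < ε → g b - g a ≤ M * (b - a) + ε * (b - a + C') := by
    intro ε hε
    -- null bad set
    set Z : Set ℝ := {t | ¬ (t ∈ Set.Ioo a b → DifferentiableAt ℝ g t ∧ deriv g t ≤ M)} with hZ
    have hZ0 : volume Z = 0 := hae
    have hZa : volume (Z ∪ {a}) = 0 := by
      rw [measure_union_null_iff]; exact ⟨hZ0, measure_singleton a⟩
    obtain ⟨U, hZU, hUopen, hUvol⟩ : ∃ U ⊇ Z ∪ {a}, IsOpen U ∧ volume U < ENNReal.ofReal ε :=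
      (Z ∪ {a}).exists_isOpen_lt_of_lt _ (by rw [hZa]; exact ENNReal.ofReal_pos.2 hε)
    have hUfin : ∀ t, volume (U ∩ Set.Ioc a t) < ⊤ :=
      fun t => lt_of_le_of_lt (measure_mono inter_subset_left)
        (hUvol.trans_le le_top)
    set ψ : ℝ → ℝ := fun t => (volume (U ∩ Set.Ioc a t)).toReal with hψ
    have hψa : ψ a = 0 := by simp [hψ]
    have Hadd : ∀ t t', a ≤ t → t ≤ t' →
        ψ t' = ψ t + (volume (U ∩ Set.Ioc t t')).toReal := by
      intro t t' hat htt'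
      have hdec : U ∩ Set.Ioc a t' = (U ∩ Set.Ioc a t) ∪ (U ∩ Set.Ioc t t') := by
        rw [← Set.inter_union_distrib_left, Set.Ioc_union_Ioc_eq_Ioc hat htt']
      have hdisj : Disjoint (U ∩ Set.Ioc a t) (U ∩ Set.Ioc t t') :=
        (Set.Ioc_disjoint_Ioc_of_le le_rfl).mono inter_subset_right inter_subset_right
      have hmeas : MeasurableSet (U ∩ Set.Ioc t t') :=
        (hUopen.measurableSet.inter measurableSet_Ioc)
      rw [hψ]
      simp only
      rw [hdec, measure_union hdisj hmeas,
        ENNReal.toReal_add (hUfin t).ne (lt_of_le_of_lt (measure_mono inter_subset_left) (hUvol.trans_le le_top)).ne]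
    have Hle : ∀ t t', a ≤ t → t ≤ t' → ψ t' - ψ t ≤ t' - t := by
      intro t t' hat htt'
      rw [Hadd t t' hat htt']
      have : volume (U ∩ Set.Ioc t t') ≤ ENNReal.ofReal (t' - t) := by
        refine le_trans (measure_mono inter_subset_right) ?_
        rw [Real.volume_Ioc]
      have := ENNReal.toReal_le_of_le_ofReal (by linarith) this
      linarith
    have Hmono : ∀ t t', a ≤ t → t ≤ t' → ψ t ≤ ψ t' := by
      intro t t' hat htt'
      rw [Hadd t t' hat htt']
      exact le_add_of_nonneg_right ENNReal.toReal_nonneg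
    -- the set S
    set S : Set ℝ := {t | t ∈ Set.Icc a b ∧ g t - g a ≤ (M + ε) * (t - a) + C' * ψ t} with hS
    have haS : a ∈ S := by
      refine ⟨⟨le_refl a, hab⟩, ?_⟩
      rw [hψa]; simp
    have hSb : ∀ t ∈ S, t ≤ b := fun t ht => ht.1.2
    have hSbdd : BddAbove S := ⟨b, hSb⟩
    have hSne : S.Nonempty := ⟨a, haS⟩
    have hSclosed : IsClosed S := by
      have hgc : ContinuousOn g (Set.Icc a b) := hg.continuousOn
      have hψlip : LipschitzOnWith 1 ψ (Set.Icc a b) := by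
        apply LipschitzOnWith.of_dist_le_mul
        intro t ht t' ht'
        rw [Real.dist_eq, Real.dist_eq, NNReal.coe_one, one_mul]
        rcases le_total t' t with h | h
        · have h1 := Hle t' t ht'.1 h
          have h2 := Hmono t' t ht'.1 h
          rw [abs_of_nonneg (by linarith), abs_of_nonneg (by linarith)]
          linarith
        · have h1 := Hle t t' ht.1 h
          have h2 := Hmono t t' ht.1 h
          rw [abs_of_nonpos (by linarith), abs_of_nonpos (by linarith)]
          linarith
      have hF : ContinuousOn (fun t => g t - g a - ((M + ε) * (t - a) + C' * ψ t)) (Set.Icc a b) := by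
        apply ContinuousOn.sub (hgc.sub continuousOn_const)
        exact ContinuousOn.add (by fun_prop) (continuousOn_const.mul hψlip.continuousOn)
      have : S = Set.Icc a b ∩ (fun t => g t - g a - ((M + ε) * (t - a) + C' * ψ t)) ⁻¹' Set.Iic 0 := by
        ext t; simp only [hS, Set.mem_setOf_eq, Set.mem_inter_iff, Set.mem_preimage, Set.mem_Iic]
        constructor
        · rintro ⟨h1, h2⟩; exact ⟨h1, by linarith⟩
        · rintro ⟨h1, h2⟩; exact ⟨h1, by linarith⟩
      rw [this]
      exact hF.preimage_isClosed_of_isClosed isClosed_Icc isClosed_Iic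
    set c := sSup S with hc
    have hcS : c ∈ S := hSclosed.csSup_mem hSne hSbdd
    have hcb : c = b := by
      by_contra hne
      have hclt : c < b := lt_of_le_of_ne (hSb c hcS) hne
      obtain ⟨⟨hac', _⟩, hcineq⟩ := hcS
      -- find t' > c in S
      have : ∃ t', c < t' ∧ t' ∈ S := by
        by_cases hcU : c ∈ U
        · obtain ⟨δ, hδ, hball⟩ := Metric.isOpen_iff.1 hUopen c hcU
          refine ⟨min b (c + δ/2), lt_min hclt (by linarith), ⟨⟨le_trans hac' (le_of_lt (lt_min hclt (by linarith))), min_le_left _ _⟩, ?_⟩⟩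
          set t' := min b (c + δ/2) with ht'
          have hct' : c < t' := lt_min hclt (by linarith)
          have hsub : Set.Ioc c t' ⊆ U := by
            intro u hu
            apply hball
            rw [Metric.mem_ball, Real.dist_eq, abs_of_pos (by linarith [hu.1])]
            have : u ≤ c + δ/2 := le_trans hu.2 (min_le_right _ _)
            linarith [hu.1]
          have hψt' : ψ t' = ψ c + (t' - c) := by
            rw [Hadd c t' hac' hct'.le, Set.inter_eq_self_of_subset_right hsub,
              Real.volume_Ioc, ENNReal.toReal_ofReal (by linarith)]
          have hgt' : g t' - g c ≤ C * (t' - c) := by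
            have h0 := hg.dist_le_mul t' ⟨le_trans hac' hct'.le, min_le_left _ _⟩ c ⟨hac', hclt.le⟩
            rw [Real.dist_eq, Real.dist_eq] at h0
            rw [(abs_of_pos (by linarith : (0:ℝ) < t' - c))] at h0
            exact le_trans (le_abs_self _) h0
          have hMabs : -|M| ≤ M := neg_abs_le M
          nlinarith [hct']
        · have hcZ : c ∉ Z ∪ {a} := fun h => hcU (hZU h)
          have hca : c ≠ a := fun h => hcZ (Or.inr (by simp [h]))
          have hcgood : DifferentiableAt ℝ g c ∧ deriv g c ≤ M := by
            have : c ∉ Z := fun h => hcZ (Or.inl h)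
            rw [hZ, Set.mem_setOf_eq, not_not] at this
            exact this ⟨lt_of_le_of_ne hac' (Ne.symm hca), hclt⟩
          have hslope : Tendsto (slope g c) (𝓝[≠] c) (𝓝 (deriv g c)) :=
            hasDerivAt_iff_tendsto_slope.1 hcgood.1.hasDerivAt
          have hev1 : ∀ᶠ t' in 𝓝[>] c, slope g c t' < deriv g c + ε := by
            apply Filter.Tendsto.eventually_lt_const (by linarith [hcgood.2])
            exact hslope.mono_left (nhdsWithin_mono c fun x hx => ne_of_gt hx)
          have hev2 : ∀ᶠ t' in 𝓝[>] c, t' ∈ Set.Ioc c b :=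
            Ioc_mem_nhdsGT_of_mem ⟨le_refl c, hclt⟩
          obtain ⟨t', hst', ht'cb⟩ := (hev1.and hev2).exists
          refine ⟨t', ht'cb.1, ⟨⟨le_trans hac' ht'cb.1.le, ht'cb.2⟩, ?_⟩⟩
          have hgt' : g t' - g c ≤ (M + ε) * (t' - c) := by
            rw [slope_def_field] at hst'
            have h1 : (g t' - g c) / (t' - c) < M + ε :=
              lt_of_lt_of_le hst' (by linarith [hcgood.2])
            rw [div_lt_iff₀ (by linarith [ht'cb.1] : (0:ℝ) < t' - c)] at h1
            linarith
          have hψm := Hmono c t' hac' ht'cb.1.le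
          nlinarith [ht'cb.1]
      obtain ⟨t', hct', ht'S⟩ := this
      exact absurd (le_csSup hSbdd ht'S) (not_le.2 hct')
    rw [hcb] at hcS
    have hψb : ψ b ≤ ε := by
      apply ENNReal.toReal_le_of_le_ofReal hε.le
      exact le_trans (measure_mono inter_subset_left) hUvol.le
    have := hcS.2
    nlinarith [hψb]
  -- conclude
  by_contra hcon
  push_neg at hcon
  have hR : 0 < b - a + C' := by linarith
  have h2 : (g b - g a - M * (b - a)) / (2 * (b - a + C')) * (b - a + C')
      = (g b - g a - M * (b - a)) / 2 := by
    field_simp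
  have h3 := key ((g b - g a - M * (b - a)) / (2 * (b - a + C')))
    (div_pos (by linarith : (0:ℝ) < g b - g a - M * (b - a)) (by linarith))
  rw [h2] at h3
  linarith




lemma ae_line_avoid (T : Set (E N)) (hT : MeasurableSet T) (hT0 : volume T = 0)
    (x v : E N) (h : ℝ) :
    ∀ᵐ w : E N, ∀ᵐ t : ℝ, t ∈ Set.Ioc 0 h → x + w + t • v ∉ T := by
  have hmeas : MeasurableSet {q : E N × ℝ | q.2 ∈ Set.Ioc 0 h → x + q.1 + q.2 • v ∉ T} := by
    have hφ : Measurable (fun q : E N × ℝ => x + q.1 + q.2 • v) := by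
      apply Measurable.add
      · exact measurable_const.add measurable_fst
      · exact measurable_snd.smul measurable_const
    have : {q : E N × ℝ | q.2 ∈ Set.Ioc 0 h → x + q.1 + q.2 • v ∉ T}
        = ((Set.univ ×ˢ Set.Ioc 0 h) ∩ (fun q : E N × ℝ => x + q.1 + q.2 • v) ⁻¹' T)ᶜ := by
      ext q
      simp only [Set.mem_setOf_eq, Set.mem_compl_iff, Set.mem_inter_iff, Set.mem_prod,
        Set.mem_preimage, Set.mem_univ, true_and]
      tauto
    rw [this]
    exact ((MeasurableSet.univ.prod measurableSet_Ioc).inter (hφ hT)).compl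
  rw [Measure.ae_ae_comm hmeas]
  apply Filter.Eventually.of_forall
  intro t
  have : {w : E N | ¬ (t ∈ Set.Ioc 0 h → x + w + t • v ∉ T)} ⊆ (fun w => (x + t • v) + w) ⁻¹' T := by
    intro w hw
    simp only [Set.mem_setOf_eq] at hw
    push_neg at hw
    have heq : x + w + t • v = (x + t • v) + w := by abel
    rw [Set.mem_preimage, ← heq]
    exact hw.2
  rw [MeasureTheory.ae_iff]
  exact measure_mono_null this (by rw [measure_preimage_add]; exact hT0)

lemma exists_grad_dir (f : E N → ℝ) (K : NNReal) (x v : E N) (r : ℝ) (hr : 0 < r)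
    (hK : LipschitzOnWith K f (Metric.ball x r)) (d : ℝ)
    (hd : Tendsto (fun h : ℝ => (f (x + h • v) - f x) / h) (𝓝[>] 0) (𝓝 d))
    (ε : ℝ) (hε : 0 < ε) :
    ∃ y, DifferentiableAt ℝ f y ∧ dist y x < ε ∧ d - ε ≤ (fderiv ℝ f y) v := by
  by_contra hcon
  push_neg at hcon
  -- Rademacher: null set of nondifferentiability
  obtain ⟨F, hF, hFf⟩ : ∃ F : E N → ℝ, LipschitzWith K F ∧ Set.EqOn f F (Metric.ball x r) :=
    hK.extend_real
  have hrad : ∀ᵐ y : E N, DifferentiableAt ℝ F y := hF.ae_differentiableAt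
  obtain ⟨T, hTsup, hT, hT0⟩ :=
    exists_measurable_superset_of_null (μ := (volume : Measure (E N)))
      (s := {y | ¬ DifferentiableAt ℝ F y}) hrad
  have hgood : ∀ y ∈ Metric.ball x r, y ∉ T → DifferentiableAt ℝ f y := by
    intro y hy hyT
    have hdF : DifferentiableAt ℝ F y := by
      by_contra hc
      exact hyT (hTsup hc)
    have heq : f =ᶠ[nhds y] F :=
      Filter.eventuallyEq_of_mem (Metric.isOpen_ball.mem_nhds hy) hFf
    exact hdF.congr_of_eventuallyEq heq
  set δ : ℝ := min ε r with hδdef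
  have hδ : 0 < δ := lt_min hε hr
  have hδε : δ ≤ ε := min_le_left _ _
  have hδr : δ ≤ r := min_le_right _ _
  -- choose h₀
  set h₀ : ℝ := δ / (4 * (‖v‖ + 1)) with hh₀def
  have hv1 : 0 < ‖v‖ + 1 := by positivity
  have hh₀ : 0 < h₀ := by positivity
  -- key estimate for each small h
  have hmain : ∀ h : ℝ, 0 < h → h < h₀ → (f (x + h • v) - f x) / h ≤ d - ε / 2 := by
    intro h hh hhh
    have hhv : h * ‖v‖ ≤ δ / 4 := by
      have h4 := (lt_div_iff₀ (by positivity : (0:ℝ) < 4 * (‖v‖+1))).1 hhh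
      nlinarith [norm_nonneg v, hh.le]
    set ρ : ℝ := min (δ/4) (ε * h / (4 * ((K:ℝ) + 1))) with hρdef
    have hρ : 0 < ρ := lt_min (by positivity) (by positivity)
    -- find good w
    have hae := ae_line_avoid T hT hT0 x v h
    have hfreq : ∃ᵐ w : E N, w ∈ Metric.ball (0 : E N) ρ := by
      rw [frequently_ae_mem_iff]
      exact (Metric.measure_ball_pos volume (0 : E N) hρ).ne'
    obtain ⟨w, hwball, hwae⟩ := (hfreq.and_eventually hae).exists
    have hwρ : ‖w‖ < ρ := by simpa [Metric.mem_ball, dist_eq_norm] using hwball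
    -- the curve point bounds
    have hptball : ∀ t ∈ Set.Icc (0:ℝ) h, x + w + t • v ∈ Metric.ball x r := by
      intro t ht
      rw [Metric.mem_ball, dist_eq_norm]
      have : x + w + t • v - x = w + t • v := by abel
      rw [this]
      calc ‖w + t • v‖ ≤ ‖w‖ + ‖t • v‖ := norm_add_le _ _
        _ ≤ ρ + h * ‖v‖ := by
            refine add_le_add hwρ.le ?_
            rw [norm_smul, Real.norm_eq_abs, abs_of_nonneg ht.1]
            exact mul_le_mul_of_nonneg_right ht.2 (norm_nonneg v)
        _ ≤ δ/4 + δ/4 := add_le_add (min_le_left _ _) hhv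
        _ < δ := by linarith
        _ ≤ r := hδr
    have hptε : ∀ t ∈ Set.Icc (0:ℝ) h, dist (x + w + t • v) x < ε := by
      intro t ht
      have := hptball t ht
      rw [Metric.mem_ball] at this
      -- reprove with ε bound
      rw [dist_eq_norm]
      have heq : x + w + t • v - x = w + t • v := by abel
      rw [heq]
      calc ‖w + t • v‖ ≤ ‖w‖ + ‖t • v‖ := norm_add_le _ _
        _ ≤ ρ + h * ‖v‖ := by
            refine add_le_add hwρ.le ?_
            rw [norm_smul, Real.norm_eq_abs, abs_of_nonneg ht.1]
            exact mul_le_mul_of_nonneg_right ht.2 (norm_nonneg v)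
        _ ≤ δ/4 + δ/4 := add_le_add (min_le_left _ _) hhv
        _ < δ := by linarith
        _ ≤ ε := hδε
    -- g_w is Lipschitz on [0,h]
    set gw : ℝ → ℝ := fun t => f (x + w + t • v) with hgw
    have hgwlip : LipschitzOnWith (K * ‖v‖₊) gw (Set.Icc 0 h) := by
      apply LipschitzOnWith.of_dist_le_mul
      intro t ht t' ht'
      have h1 := hK.dist_le_mul _ (hptball t ht) _ (hptball t' ht')
      calc dist (gw t) (gw t') ≤ K * dist (x + w + t • v) (x + w + t' • v) := h1
        _ = K * (‖v‖ * dist t t') := by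
            have heq : x + w + t • v - (x + w + t' • v) = (t - t') • v := by
              rw [sub_smul]; abel
            rw [dist_eq_norm, heq, norm_smul, Real.norm_eq_abs, ← Real.dist_eq]
            ring
        _ = ↑(K * ‖v‖₊) * dist t t' := by
            rw [NNReal.coe_mul, coe_nnnorm, mul_assoc]
    -- a.e. derivative bound
    have hgae : ∀ᵐ t : ℝ, t ∈ Set.Ioo 0 h → DifferentiableAt ℝ gw t ∧ deriv gw t ≤ d - ε := by
      filter_upwards [hwae] with t htav htIoo
      have htIoc : t ∈ Set.Ioc 0 h := ⟨htIoo.1, htIoo.2.le⟩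
      have htIcc : t ∈ Set.Icc (0:ℝ) h := ⟨htIoo.1.le, htIoo.2.le⟩
      have hyT : x + w + t • v ∉ T := htav htIoc
      have hyball := hptball t htIcc
      have hdiff : DifferentiableAt ℝ f (x + w + t • v) := hgood _ hyball hyT
      have hline : HasDerivAt (fun t : ℝ => x + w + t • v) v t := by
        have h1 : HasDerivAt (fun t : ℝ => t • v) ((1:ℝ) • v) t := (hasDerivAt_id t).smul_const v
        simpa using h1.const_add (x + w)
      have hcomp : HasDerivAt gw ((fderiv ℝ f (x + w + t • v)) v) t :=
        hdiff.hasFDerivAt.comp_hasDerivAt t hline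
      refine ⟨hcomp.differentiableAt, ?_⟩
      rw [hcomp.deriv]
      exact le_of_lt (hcon _ hdiff (hptε t htIcc))
    -- growth lemma
    have hgrow := growth_lemma gw 0 h (d - ε) hh.le (K * ‖v‖₊) hgwlip hgae
    -- transfer to f
    have hxhball : x + h • v ∈ Metric.ball x r := by
      rw [Metric.mem_ball, dist_eq_norm]
      have h2 : x + h • v - x = h • v := by abel
      rw [h2, norm_smul, Real.norm_eq_abs, abs_of_nonneg hh.le]
      calc h * ‖v‖ ≤ δ/4 := hhv
        _ < δ := by linarith
        _ ≤ r := hδr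
    have hb1 : |f (x + h • v) - f (x + w + h • v)| ≤ K * ρ := by
      have h1 := hK.dist_le_mul (x + h • v) hxhball (x + w + h • v) (hptball h ⟨hh.le, le_refl h⟩)
      rw [Real.dist_eq] at h1
      refine le_trans h1 ?_
      rw [dist_eq_norm]
      have h2 : x + h • v - (x + w + h • v) = -w := by abel
      rw [h2, norm_neg]
      exact mul_le_mul_of_nonneg_left hwρ.le K.coe_nonneg
    have hxwball : x + w ∈ Metric.ball x r := by
      have := hptball 0 ⟨le_refl 0, hh.le⟩
      simpa using this
    have hb2 : |f (x + w) - f x| ≤ K * ρ := by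
      have h1 := hK.dist_le_mul (x + w) hxwball x (Metric.mem_ball_self hr)
      rw [Real.dist_eq] at h1
      refine le_trans h1 ?_
      rw [dist_eq_norm]
      have h2 : x + w - x = w := by abel
      rw [h2]
      exact mul_le_mul_of_nonneg_left hwρ.le K.coe_nonneg
    have hgw0 : gw 0 = f (x + w) := by simp [hgw]
    have hgwh : gw h = f (x + w + h • v) := rfl
    have hKρ : (K:ℝ) * ρ ≤ ε * h / 4 := by
      have hρ2 : ρ ≤ ε * h / (4 * ((K:ℝ) + 1)) := min_le_right _ _
      calc (K:ℝ) * ρ ≤ (K:ℝ) * (ε * h / (4 * ((K:ℝ)+1))) :=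
            mul_le_mul_of_nonneg_left hρ2 K.coe_nonneg
        _ ≤ ε * h / 4 := by
            have hA : 0 ≤ ε * h / (4 * ((K:ℝ)+1)) := by positivity
            have hid : ε * h / (4 * ((K:ℝ)+1)) * (4 * ((K:ℝ)+1)) = ε * h := by
              field_simp
            nlinarith [K.coe_nonneg]
    have habs1 := abs_le.1 hb1
    have habs2 := abs_le.1 hb2
    rw [div_le_iff₀ hh]
    have : f (x + h • v) - f x =
        (gw h - gw 0) + (f (x + h • v) - f (x + w + h • v)) + (f (x + w) - f x) := by
      rw [hgw0, hgwh]; ring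
    rw [this]
    have hgrow' : gw h - gw 0 ≤ (d - ε) * h := by
      simpa using hgrow
    nlinarith [hh]
  -- contradiction with tendsto
  have hev : ∀ᶠ h : ℝ in 𝓝[>] 0, (f (x + h • v) - f x) / h ≤ d - ε / 2 := by
    filter_upwards [Ioo_mem_nhdsGT_of_mem ⟨le_refl (0:ℝ), hh₀⟩] with h hh
    exact hmain h hh.1 hh.2
  have : d ≤ d - ε / 2 :=
    le_of_tendsto hd hev
  linarith


/-- Clarke chain rule along an absolutely continuous curve η : (−∞,0] → ℝ^N
(with a.e. derivative g): if f ∘ η and η are differentiable at s, then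
(d/dt) f(η(t))|_{t=s} = p · η̇(s) for some p ∈ ∂f(η(s)). -/
theorem clarke_chain_rule
    (f : E N → ℝ) (hf : LocallyLipschitz f)
    (η g : ℝ → E N)
    (hgint : ∀ a ∈ Iic (0:ℝ), IntegrableOn g (Icc a 0))
    (hac : ∀ t ∈ Iic (0:ℝ), η 0 - η t = ∫ s in Ioc t 0, g s)
    (s : ℝ) (hs : s ∈ Iic (0:ℝ))
    (h1 : DifferentiableAt ℝ (fun t => f (η t)) s)
    (h2 : DifferentiableAt ℝ η s) :
    ∃ p ∈ clarke f (η s), deriv (fun t => f (η t)) s = p (deriv η s) := by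
  classical
  set x := η s with hx
  set v := deriv η s with hv
  set d := deriv (fun t => f (η t)) s with hd0
  have hηd : HasDerivAt η v s := h2.hasDerivAt
  have hfd : HasDerivAt (fun t => f (η t)) d s := h1.hasDerivAt
  obtain ⟨K, U, hU, hKU⟩ := hf x
  obtain ⟨r, hr, hball⟩ := Metric.mem_nhds_iff.1 hU
  have hK : LipschitzOnWith K f (Metric.ball x r) := hKU.mono hball
  -- Step 1: directional difference quotient tends to d
  have hdir : Tendsto (fun h : ℝ => (f (x + h • v) - f x) / h) (𝓝[≠] 0) (𝓝 d) := by
    have hA : Tendsto (fun h : ℝ => h⁻¹ • ((fun t => f (η t)) (s + h) - (fun t => f (η t)) s))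
        (𝓝[≠] 0) (𝓝 d) := hfd.tendsto_slope_zero
    have hB : Tendsto (fun h : ℝ => h⁻¹ • (η (s + h) - η s)) (𝓝[≠] 0) (𝓝 v) :=
      hηd.tendsto_slope_zero
    have hbound : Tendsto (fun h : ℝ => (K:ℝ) * ‖v - h⁻¹ • (η (s + h) - η s)‖) (𝓝[≠] 0) (𝓝 0) := by
      have hs1 : Tendsto (fun h : ℝ => v - h⁻¹ • (η (s + h) - η s)) (𝓝[≠] 0) (𝓝 (v - v)) :=
        tendsto_const_nhds.sub hB
      rw [sub_self] at hs1
      have hnorm : Tendsto (fun h : ℝ => ‖v - h⁻¹ • (η (s + h) - η s)‖) (𝓝[≠] 0) (𝓝 0) := by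
        simpa using hs1.norm
      simpa using hnorm.const_mul (K:ℝ)
    have hη : ∀ᶠ h : ℝ in 𝓝 (0:ℝ), η (s + h) ∈ Metric.ball x r := by
      have hadd : Tendsto (fun h : ℝ => s + h) (𝓝 0) (𝓝 s) := by
        simpa using (tendsto_const_nhds.add tendsto_id :
          Tendsto (fun h : ℝ => s + h) (𝓝 0) (𝓝 (s + 0)))
      have hc : Tendsto (fun h : ℝ => η (s + h)) (𝓝 0) (𝓝 x) :=
        (hηd.continuousAt.tendsto).comp hadd
      exact hc.eventually (Metric.isOpen_ball.eventually_mem (Metric.mem_ball_self hr))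
    have hxv : ∀ᶠ h : ℝ in 𝓝 (0:ℝ), x + h • v ∈ Metric.ball x r := by
      have hc : Tendsto (fun h : ℝ => x + h • v) (𝓝 0) (𝓝 x) := by
        have hcont : Continuous (fun h : ℝ => x + h • v) :=
          continuous_const.add (continuous_id.smul continuous_const)
        have := hcont.tendsto 0
        simpa using this
      exact hc.eventually (Metric.isOpen_ball.eventually_mem (Metric.mem_ball_self hr))
    have hev : ∀ᶠ h : ℝ in 𝓝[≠] 0,
        ‖h⁻¹ • (f (x + h • v) - f (η (s + h)))‖
          ≤ (K:ℝ) * ‖v - h⁻¹ • (η (s + h) - η s)‖ := by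
      filter_upwards [hη.filter_mono nhdsWithin_le_nhds, hxv.filter_mono nhdsWithin_le_nhds,
        self_mem_nhdsWithin] with h hη' hxv' hne
      have hne0 : h ≠ 0 := hne
      have hlip := hK.dist_le_mul _ hxv' _ hη'
      rw [Real.dist_eq, dist_eq_norm] at hlip
      rw [norm_smul]
      calc ‖h⁻¹‖ * ‖f (x + h • v) - f (η (s + h))‖
          ≤ ‖h⁻¹‖ * ((K:ℝ) * ‖x + h • v - η (s + h)‖) := by
            apply mul_le_mul_of_nonneg_left _ (norm_nonneg _)
            simpa [Real.norm_eq_abs, abs_sub_comm] using hlip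
        _ = (K:ℝ) * ‖h⁻¹ • (x + h • v - η (s + h))‖ := by rw [norm_smul]; ring
        _ = (K:ℝ) * ‖v - h⁻¹ • (η (s + h) - η s)‖ := by
            congr 2
            have heq : h⁻¹ • (x + h • v - η (s + h))
                = h⁻¹ • (h • v) - h⁻¹ • (η (s + h) - x) := by
              rw [← smul_sub]; congr 1; abel
            rw [heq, smul_smul, inv_mul_cancel₀ hne0, one_smul]
    have hD : Tendsto (fun h : ℝ => h⁻¹ • (f (x + h • v) - f (η (s + h)))) (𝓝[≠] 0) (𝓝 0) :=
      squeeze_zero_norm' hev hbound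
    have hsum := hD.add hA
    rw [zero_add] at hsum
    have heq2 : (fun h : ℝ => (f (x + h • v) - f x) / h)
        = fun h : ℝ => h⁻¹ • (f (x + h • v) - f (η (s + h)))
          + h⁻¹ • ((fun t => f (η t)) (s + h) - (fun t => f (η t)) s) := by
      funext h
      simp only [smul_eq_mul]
      rw [div_eq_inv_mul, hx]
      ring
    rw [heq2]
    exact hsum
  have hdirpos : Tendsto (fun h : ℝ => (f (x + h • v) - f x) / h) (𝓝[>] 0) (𝓝 d) :=
    hdir.mono_left (nhdsWithin_mono 0 fun y hy => ne_of_gt hy)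
  -- negated function
  have hKneg : LipschitzOnWith K (fun y => -f y) (Metric.ball x r) := by
    apply LipschitzOnWith.of_dist_le_mul
    intro y hy z hz
    rw [dist_neg_neg]
    exact hK.dist_le_mul y hy z hz
  have hdirneg : Tendsto (fun h : ℝ => ((fun y => -f y) (x + h • v) - (fun y => -f y) x) / h)
      (𝓝[>] 0) (𝓝 (-d)) := by
    have heq : (fun h : ℝ => ((fun y => -f y) (x + h • v) - (fun y => -f y) x) / h)
        = fun h : ℝ => -((f (x + h • v) - f x) / h) := by
      funext h; simp only; ring
    rw [heq]
    exact hdirpos.neg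
  -- sequences
  have hεpos : ∀ n : ℕ, (0:ℝ) < min r (1/((n:ℝ)+1)) := fun n => lt_min hr (by positivity)
  have hεto : Tendsto (fun n : ℕ => min r (1/((n:ℝ)+1))) atTop (𝓝 0) := by
    apply squeeze_zero (fun n => (hεpos n).le) (fun n => min_le_right _ _)
    exact tendsto_one_div_add_atTop_nhds_zero_nat
  have hseq1 : ∀ n : ℕ, ∃ y, DifferentiableAt ℝ f y ∧ dist y x < min r (1/((n:ℝ)+1)) ∧
      d - min r (1/((n:ℝ)+1)) ≤ (fderiv ℝ f y) v := fun n =>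
    exists_grad_dir f K x v r hr hK d hdirpos _ (hεpos n)
  choose y hy1 hy2 hy3 using hseq1
  have hseq2 : ∀ n : ℕ, ∃ z, DifferentiableAt ℝ (fun y => -f y) z ∧
      dist z x < min r (1/((n:ℝ)+1)) ∧
      -d - min r (1/((n:ℝ)+1)) ≤ (fderiv ℝ (fun y => -f y) z) v := fun n =>
    exists_grad_dir (fun y => -f y) K x v r hr hKneg (-d) hdirneg _ (hεpos n)
  choose z hz1 hz2 hz3 using hseq2
  have hz1' : ∀ n, DifferentiableAt ℝ f (z n) := fun n => by
    simpa using (hz1 n).neg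
  have hz3' : ∀ n, (fderiv ℝ f (z n)) v ≤ d + min r (1/((n:ℝ)+1)) := by
    intro n
    have h4 := hz3 n
    rw [fderiv_fun_neg] at h4
    simp only [ContinuousLinearMap.neg_apply] at h4
    linarith
  -- gradient bounds
  have hybd : ∀ n, fderiv ℝ f (y n) ∈ Metric.closedBall (0 : Dual N) K := by
    intro n
    rw [Metric.mem_closedBall, dist_zero_right]
    apply (hy1 n).hasFDerivAt.le_of_lipschitzOn
      (Metric.isOpen_ball.mem_nhds (by
        rw [Metric.mem_ball]
        exact lt_of_lt_of_le (hy2 n) (min_le_left _ _))) hK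
  have hzbd : ∀ n, fderiv ℝ f (z n) ∈ Metric.closedBall (0 : Dual N) K := by
    intro n
    rw [Metric.mem_closedBall, dist_zero_right]
    apply (hz1' n).hasFDerivAt.le_of_lipschitzOn
      (Metric.isOpen_ball.mem_nhds (by
        rw [Metric.mem_ball]
        exact lt_of_lt_of_le (hz2 n) (min_le_left _ _))) hK
  haveI : ProperSpace (Dual N) := FiniteDimensional.proper ℝ (Dual N)
  have hcpt : IsCompact (Metric.closedBall (0 : Dual N) K) := isCompact_closedBall _ _
  obtain ⟨pp, _, φ, hφ, hφt⟩ := hcpt.tendsto_subseq hybd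
  obtain ⟨pm, _, ψ, hψ, hψt⟩ := hcpt.tendsto_subseq hzbd
  set S : Set (Dual N) := {p | ∃ u : ℕ → E N, (∀ n, DifferentiableAt ℝ f (u n)) ∧
    Tendsto u atTop (𝓝 x) ∧ Tendsto (fun n => fderiv ℝ f (u n)) atTop (𝓝 p)} with hS
  have hεφ : ∀ (φ' : ℕ → ℕ), StrictMono φ' →
      Tendsto (fun n => min r (1/((φ' n:ℝ)+1))) atTop (𝓝 0) := by
    intro φ' hφ'
    exact hεto.comp hφ'.tendsto_atTop
  have htendx : ∀ (u : ℕ → E N) (φ' : ℕ → ℕ), StrictMono φ' →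
      (∀ n, dist (u n) x < min r (1/((n:ℝ)+1))) → Tendsto (u ∘ φ') atTop (𝓝 x) := by
    intro u φ' hφ' hd'
    rw [tendsto_iff_dist_tendsto_zero]
    exact squeeze_zero (fun n => dist_nonneg) (fun n => (hd' (φ' n)).le) (hεφ φ' hφ')
  have hppS : pp ∈ S := by
    refine ⟨y ∘ φ, fun n => hy1 (φ n), htendx y φ hφ hy2, hφt⟩
  have hpmS : pm ∈ S := by
    refine ⟨z ∘ ψ, fun n => hz1' (ψ n), htendx z ψ hψ hz2, hψt⟩
  -- limit inequalities
  have happ : Tendsto (fun n => (fderiv ℝ f (y (φ n))) v) atTop (𝓝 (pp v)) :=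
    ((ContinuousLinearMap.apply ℝ ℝ v).continuous.tendsto pp).comp hφt
  have hapm : Tendsto (fun n => (fderiv ℝ f (z (ψ n))) v) atTop (𝓝 (pm v)) :=
    ((ContinuousLinearMap.apply ℝ ℝ v).continuous.tendsto pm).comp hψt
  have hdpp : d ≤ pp v := by
    have hlow : Tendsto (fun n => d - min r (1/((φ n:ℝ)+1))) atTop (𝓝 (d - 0)) :=
      tendsto_const_nhds.sub (hεφ φ hφ)
    rw [sub_zero] at hlow
    exact le_of_tendsto_of_tendsto' hlow happ (fun n => hy3 (φ n))
  have hdpm : pm v ≤ d := by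
    have hhigh : Tendsto (fun n => d + min r (1/((ψ n:ℝ)+1))) atTop (𝓝 (d + 0)) :=
      tendsto_const_nhds.add (hεφ ψ hψ)
    rw [add_zero] at hhigh
    exact le_of_tendsto_of_tendsto' hapm hhigh (fun n => hz3' (ψ n))
  -- choose p on segment
  have hSsub : S ⊆ clarke f x := subset_convexHull ℝ _
  by_cases hcase : pp v = pm v
  · refine ⟨pp, hSsub hppS, ?_⟩
    have h5 : pp v ≤ d := by rw [hcase]; exact hdpm
    linarith [hdpp]
  · have hlt : pm v < pp v := lt_of_le_of_ne (le_trans hdpm hdpp) fun h => hcase h.symm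
    set θ : ℝ := (pp v - d)/(pp v - pm v) with hθdef
    have hsub : (0:ℝ) < pp v - pm v := by linarith
    have hθ0 : 0 ≤ θ := div_nonneg (by linarith) hsub.le
    have hθ1 : θ ≤ 1 := by
      rw [hθdef, div_le_one hsub]
      linarith
    refine ⟨θ • pm + (1 - θ) • pp, ?_, ?_⟩
    · exact (convex_convexHull ℝ _) (subset_convexHull ℝ _ hpmS) (subset_convexHull ℝ _ hppS)
        hθ0 (by linarith) (by ring)
    · simp only [ContinuousLinearMap.add_apply, ContinuousLinearMap.coe_smul',
        Pi.smul_apply, smul_eq_mul]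
      rw [hθdef]
      field_simp
      ring
end
end

section
/- Let H : 𝕋^N × ℝ^N → ℝ be continuous and coercive in p (uniformly: H(x,p) → +∞ as |p| → ∞ uniformly in x), let a > 0 be a constant and f : 𝕋^N → ℝ continuous. If u is an upper semicontinuous viscosity subsolution and v a lower semicontinuous viscosity supersolution of a·w(x) + H(x, Dw) − f(x) = 0 on 𝕋^N, then u ≤ v on 𝕋^N. -/
open Set MeasureTheory Filter Topology

noncomputable section

variable {N : ℕ}

lemma usc_max {X : Type*} [TopologicalSpace X] {s : Set X} (hs : IsCompact s)
    (hne : s.Nonempty) {g : X → ℝ} (hg : UpperSemicontinuous g) :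
    ∃ x ∈ s, ∀ y ∈ s, g y ≤ g x := by
  by_contra h
  push_neg at h
  choose! y hy hlt using h
  have hcov : s ⊆ ⋃ x ∈ s, {z | g z < g (y x)} := fun x hx =>
    Set.mem_biUnion hx (hlt x hx)
  obtain ⟨b, hbs, hbfin, hbcov⟩ := hs.elim_finite_subcover_image
    (fun x _ => hg.isOpen_preimage (g (y x))) hcov
  have hbne : b.Nonempty := by
    obtain ⟨x, hx⟩ := hne
    obtain ⟨i, hi, -⟩ := Set.mem_iUnion₂.1 (hbcov hx)
    exact ⟨i, hi⟩
  obtain ⟨i, hib, hmax⟩ := Finset.exists_max_image hbfin.toFinset (fun x => g (y x))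
    (by simpa [Set.Finite.toFinset_nonempty] using hbne)
  rw [Set.Finite.mem_toFinset] at hib
  have hyi : y i ∈ s := hy i (hbs hib)
  obtain ⟨j, hjb, hj⟩ := Set.mem_iUnion₂.1 (hbcov hyi)
  exact absurd (hmax j (hbfin.mem_toFinset.2 hjb)) (not_le.2 hj)

lemma exists_translate (x : E N) :
    ∃ k : Fin N → ℤ,
      ‖x + (EuclideanSpace.equiv (Fin N) ℝ).symm (fun i => ((k i : ℤ) : ℝ))‖ ≤ Real.sqrt N := by
  refine ⟨fun i => -⌊x i⌋, ?_⟩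
  set y : E N := x + (EuclideanSpace.equiv (Fin N) ℝ).symm (fun i => ((-⌊x i⌋ : ℤ) : ℝ)) with hy
  have hyi : ∀ i, y i = Int.fract (x i) := by
    intro i
    simp [hy, Int.fract, EuclideanSpace.equiv, sub_eq_add_neg]
  rw [EuclideanSpace.norm_eq]
  apply Real.sqrt_le_sqrt
  calc ∑ i, ‖y i‖ ^ 2 ≤ ∑ _i : Fin N, 1 := by
        apply Finset.sum_le_sum
        intro i _
        rw [hyi i]
        have h1 := Int.fract_nonneg (x i)
        have h2 := Int.fract_lt_one (x i)
        rw [Real.norm_eq_abs, abs_of_nonneg h1]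
        nlinarith
    _ = (N : ℝ) := by simp

set_option maxHeartbeats 1000000 in
set_option synthInstance.maxHeartbeats 400000 in
/-- comparison principle for the discounted equation
a·w + H(x,Dw) − f(x) = 0 on the torus: an USC subsolution lies below a LSC supersolution. -/
theorem discounted_comparison
    (H : E N → Dual N → ℝ)
    (hHc : Continuous fun q : E N × Dual N => H q.1 q.2)
    (hHper : ∀ p, ZPer fun x => H x p)
    (hcoer : ∀ C : ℝ, ∃ R : ℝ, ∀ x p, R ≤ ‖p‖ → C ≤ H x p)
    (a : ℝ) (ha : 0 < a)
    (f : E N → ℝ) (hf : Continuous f) (hfper : ZPer f)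
    (u v : E N → ℝ)
    (hu : UpperSemicontinuous u) (huper : ZPer u)
    (hv : LowerSemicontinuous v) (hvper : ZPer v)
    (hsub : ∀ x, ∀ p ∈ Dplus u x, a * u x + H x p - f x ≤ 0)
    (hsup : ∀ x, ∀ p ∈ Dminus v x, 0 ≤ a * v x + H x p - f x) :
    ∀ x, u x ≤ v x := by
  set D : Set (E N) := Metric.closedBall (0 : E N) (Real.sqrt N) with hD_def
  have hD : IsCompact D := isCompact_closedBall _ _
  have hDne : D.Nonempty := ⟨0, Metric.mem_closedBall_self (Real.sqrt_nonneg _)⟩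
  have h0D : (0 : E N) ∈ D := Metric.mem_closedBall_self (Real.sqrt_nonneg _)
  have htrans : ∀ x : E N, ∃ k : Fin N → ℤ,
      x + (EuclideanSpace.equiv (Fin N) ℝ).symm (fun i => ((k i : ℤ) : ℝ)) ∈ D := by
    intro x
    obtain ⟨k, hk⟩ := exists_translate x
    exact ⟨k, by simpa [hD_def, Metric.mem_closedBall, dist_eq_norm] using hk⟩
  -- u bounded above
  obtain ⟨xu, hxu, hMu⟩ := usc_max hD hDne hu
  have hMu' : ∀ x, u x ≤ u xu := by
    intro x
    obtain ⟨k, hk⟩ := htrans x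
    rw [← huper x k]
    exact hMu _ hk
  -- v bounded below
  have hnegv : UpperSemicontinuous (fun x => -(v x)) := by
    intro x c hc
    have hc' : -(v x) < c := hc
    filter_upwards [hv x (-c) (by linarith)] with y hy
    show -(v y) < c
    linarith
  obtain ⟨xv, hxv, hmv⟩ := usc_max hD hDne hnegv
  have hmv' : ∀ x, v xv ≤ v x := by
    intro x
    obtain ⟨k, hk⟩ := htrans x
    have h1 := hmv _ hk
    have h2 := hvper x k
    linarith [h2 ▸ h1]
  -- f bounded above on D
  obtain ⟨xf, hxf, hMf⟩ := usc_max hD hDne hf.upperSemicontinuous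
  set Mu := u xu with hMu_def
  set mv := v xv with hmv_def
  set c : ℝ := u 0 - v 0 with hc_def
  set A : ℝ := Mu - mv - c with hA_def
  have hA : 0 ≤ A := by
    have := hMu' 0
    have := hmv' 0
    simp only [hA_def, hc_def]
    linarith
  set C₀ : ℝ := f xf - a * (c + mv) with hC₀_def
  obtain ⟨R, hR⟩ := hcoer (C₀ + 1)
  intro x0
  have key : ∀ ε > 0, a * (u x0 - v x0) ≤ ε := by
    intro ε hε
    -- uniform continuity step
    obtain ⟨δ, hδpos, hδ⟩ : ∃ δ > 0, ∀ x ∈ D, ∀ z : E N, ‖z‖ ≤ 1 →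
        ∀ p : Dual N, ‖p‖ ≤ R → ‖z‖ < δ →
        f x - f (x - z) + H (x - z) p - H x p < ε := by
      set G : (E N × E N) × Dual N → ℝ :=
        fun w => f w.1.1 - f (w.1.1 - w.1.2) + H (w.1.1 - w.1.2) w.2 - H w.1.1 w.2 with hG_def
      have hGc : Continuous G := by
        apply Continuous.sub
        apply Continuous.add
        apply Continuous.sub
        · exact hf.comp (continuous_fst.comp continuous_fst)
        · exact hf.comp ((continuous_fst.comp continuous_fst).sub (continuous_snd.comp continuous_fst))
        · exact hHc.comp (((continuous_fst.comp continuous_fst).sub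
            (continuous_snd.comp continuous_fst)).prodMk continuous_snd)
        · exact hHc.comp ((continuous_fst.comp continuous_fst).prodMk continuous_snd)
      set T : Set ((E N × E N) × Dual N) :=
        (D ×ˢ Metric.closedBall (0 : E N) 1) ×ˢ Metric.closedBall (0 : Dual N) R with hT_def
      have hTc : IsCompact T := ((hD.prod (isCompact_closedBall _ _)).prod (isCompact_closedBall _ _))
      set T' : Set ((E N × E N) × Dual N) := T ∩ G ⁻¹' (Ici ε) with hT'_def
      have hT'c : IsCompact T' := hTc.inter_right (isClosed_Ici.preimage hGc)
      by_cases hne : T'.Nonempty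
      · obtain ⟨w₀, hw₀, hmin⟩ := hT'c.exists_isMinOn hne
          ((continuous_norm.comp (continuous_snd.comp continuous_fst)).continuousOn
            (s := T') (f := fun w : (E N × E N) × Dual N => ‖w.1.2‖))
        refine ⟨‖w₀.1.2‖, ?_, ?_⟩
        · rcases eq_or_lt_of_le (norm_nonneg w₀.1.2) with h | h
          · exfalso
            have hz : w₀.1.2 = 0 := by
              rw [← norm_eq_zero]; exact h.symm
            have hG0 : G w₀ = 0 := by
              simp [hG_def, hz]
            have := hw₀.2
            simp only [Set.mem_preimage, Set.mem_Ici, hG0] at this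
            linarith
          · exact h
        · intro x hx z hz p hp hzδ
          by_contra hcon
          push_neg at hcon
          have hmem : ((x, z), p) ∈ T' := by
            refine ⟨⟨⟨hx, ?_⟩, ?_⟩, hcon⟩
            · simpa [Metric.mem_closedBall, dist_eq_norm] using hz
            · simpa [Metric.mem_closedBall, dist_eq_norm] using hp
          exact absurd (hmin hmem) (not_le.2 hzδ)
      · refine ⟨1, one_pos, ?_⟩
        intro x hx z hz p hp _
        by_contra hcon
        push_neg at hcon
        exact hne ⟨((x, z), p), ⟨⟨hx, by simpa [Metric.mem_closedBall, dist_eq_norm] using hz⟩,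
          by simpa [Metric.mem_closedBall, dist_eq_norm] using hp⟩, hcon⟩
    set K : ℝ := max (A + 1) (R / (2 * δ)) with hK_def
    have hK1 : A + 1 ≤ K := le_max_left _ _
    have hKpos : 0 < K := lt_of_lt_of_le (by linarith) hK1
    -- maximization
    set S : Set (E N × E N) := D ×ˢ Metric.closedBall (0 : E N) 1 with hS_def
    have hS : IsCompact S := hD.prod (isCompact_closedBall _ _)
    set g : E N × E N → ℝ := fun q => u q.1 - v (q.1 - q.2) - K * ‖q.2‖ ^ 2 with hg_def
    have hgusc : UpperSemicontinuous g := by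
      have heq : g = fun q : E N × E N =>
          u q.1 + (-(v (q.1 - q.2)) + -(K * ‖q.2‖ ^ 2)) := by
        funext q; simp [hg_def]; ring
      rw [heq]
      exact (hu.comp continuous_fst).add
        ((hnegv.comp (continuous_fst.sub continuous_snd)).add
          ((continuous_const.mul ((continuous_norm.comp continuous_snd).pow 2)).neg.upperSemicontinuous)
          )
    have hSne : S.Nonempty :=
      ⟨(0, 0), ⟨h0D, Metric.mem_closedBall_self zero_le_one⟩⟩
    obtain ⟨q, hqS, hqmax⟩ := usc_max hS hSne hgusc
    have hq1D : q.1 ∈ D := hqS.1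
    have hq2 : ‖q.2‖ ≤ 1 := by
      have := hqS.2
      simpa [Metric.mem_closedBall, dist_eq_norm] using this
    -- extension of maximality
    have hqmax' : ∀ (x z : E N), ‖z‖ ≤ 1 → g (x, z) ≤ g q := by
      intro x z hz
      obtain ⟨k, hk⟩ := htrans x
      have h1 : g (x + (EuclideanSpace.equiv (Fin N) ℝ).symm fun i => ((k i : ℤ) : ℝ), z)
          = g (x, z) := by
        simp only [hg_def]
        rw [show x + ((EuclideanSpace.equiv (Fin N) ℝ).symm fun i => ((k i : ℤ) : ℝ)) - z
            = (x - z) + ((EuclideanSpace.equiv (Fin N) ℝ).symm fun i => ((k i : ℤ) : ℝ)) by abel,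
          huper x k, hvper (x - z) k]
      rw [← h1]
      exact hqmax _ ⟨hk, by simpa [Metric.mem_closedBall, dist_eq_norm] using hz⟩
    -- basic bounds at the max point
    have hbound : c ≤ u q.1 - v (q.1 - q.2) - K * ‖q.2‖ ^ 2 := by
      have := hqmax' 0 0 (by simp)
      simpa [hg_def, hc_def] using this
    have hKz : K * ‖q.2‖ ^ 2 ≤ A := by
      have h1 := hMu' q.1
      have h2 := hmv' (q.1 - q.2)
      simp only [hA_def]
      linarith
    have hzK1 : ‖q.2‖ < 1 := by
      nlinarith [norm_nonneg q.2, sq_nonneg (‖q.2‖ - 1)]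
    have hulow : c + mv ≤ u q.1 := by
      have h2 := hmv' (q.1 - q.2)
      nlinarith [norm_nonneg q.2, sq_nonneg (‖q.2‖)]
    -- the common gradient
    set p : Dual N := (2 * K) • innerSL ℝ q.2 with hp_def
    have hpnorm : ‖p‖ = 2 * K * ‖q.2‖ := by
      rw [hp_def, norm_smul (α := ℝ) (β := Dual N) (2 * K) (innerSL ℝ q.2),
        innerSL_apply_norm, Real.norm_eq_abs, abs_of_pos (by linarith)]
    -- test function for u at q.1
    have hsub' : a * u q.1 + H q.1 p - f q.1 ≤ 0 := by
      apply hsub q.1 p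
      set φ : E N → ℝ := fun x => (u q.1 - K * ‖q.2‖ ^ 2) + K * ‖x - (q.1 - q.2)‖ ^ 2 with hφ_def
      have hφd : HasFDerivAt φ p q.1 := by
        have h1 : HasFDerivAt (fun x : E N => x - (q.1 - q.2))
            (ContinuousLinearMap.id ℝ (E N)) q.1 := (hasFDerivAt_id _).sub_const _
        have h2 := (h1.norm_sq.const_mul K).const_add (u q.1 - K * ‖q.2‖ ^ 2)
        refine h2.congr_fderiv ?_
        ext w
        simp only [hp_def, ContinuousLinearMap.smul_apply, innerSL_apply_apply,
          ContinuousLinearMap.coe_smul', Pi.smul_apply, two_smul,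
          ContinuousLinearMap.add_apply, ContinuousLinearMap.coe_comp',
          Function.comp_apply, ContinuousLinearMap.coe_id', id_eq, smul_eq_mul,
          sub_sub_cancel]
        ring
      have hφC : ContDiff ℝ 1 φ :=
        contDiff_const.add (contDiff_const.mul
          ((contDiff_norm_sq ℝ (E := E N)).comp (contDiff_id.sub contDiff_const)))
      refine ⟨φ, hφC, ?_, ?_, hφd.fderiv⟩
      · simp [hφ_def, sub_sub_cancel]
      · have hball : Metric.ball (q.1 - q.2) 1 ∈ 𝓝 q.1 := by
          apply Metric.isOpen_ball.mem_nhds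
          simpa [Metric.mem_ball, dist_eq_norm, sub_sub_cancel] using hzK1
        filter_upwards [hball] with x hx
        have hx1 : ‖x - (q.1 - q.2)‖ ≤ 1 := by
          have := Metric.mem_ball.1 hx
          rw [dist_eq_norm] at this
          linarith
        have := hqmax' x (x - (q.1 - q.2)) hx1
        simp only [hg_def, sub_sub_cancel] at this
        simp only [hφ_def]
        linarith
    -- test function for v at q.1 - q.2
    have hsup' : 0 ≤ a * v (q.1 - q.2) + H (q.1 - q.2) p - f (q.1 - q.2) := by
      apply hsup (q.1 - q.2) p
      set ψ : E N → ℝ := fun y => (v (q.1 - q.2) + K * ‖q.2‖ ^ 2) - K * ‖q.1 - y‖ ^ 2 with hψ_def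
      have hψd : HasFDerivAt ψ p (q.1 - q.2) := by
        have h1 : HasFDerivAt (fun y : E N => q.1 - y)
            (-(ContinuousLinearMap.id ℝ (E N))) (q.1 - q.2) :=
          (hasFDerivAt_id _).const_sub _
        have h2 := (h1.norm_sq.const_mul K).const_sub (v (q.1 - q.2) + K * ‖q.2‖ ^ 2)
        refine h2.congr_fderiv ?_
        ext w
        simp only [hp_def, ContinuousLinearMap.smul_apply, innerSL_apply_apply,
          ContinuousLinearMap.coe_smul', Pi.smul_apply, two_smul,
          ContinuousLinearMap.add_apply, ContinuousLinearMap.coe_comp',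
          Function.comp_apply, ContinuousLinearMap.neg_apply, smul_eq_mul,
          ContinuousLinearMap.coe_id', id_eq, sub_sub_cancel, inner_neg_right]
        ring
      have hψC : ContDiff ℝ 1 ψ :=
        contDiff_const.sub (contDiff_const.mul
          ((contDiff_norm_sq ℝ (E := E N)).comp (contDiff_const.sub contDiff_id)))
      refine ⟨ψ, hψC, ?_, ?_, hψd.fderiv⟩
      · simp [hψ_def, sub_sub_cancel]
      · have hball : Metric.ball q.1 1 ∈ 𝓝 (q.1 - q.2) := by
          apply Metric.isOpen_ball.mem_nhds
          simpa [Metric.mem_ball, dist_eq_norm, norm_sub_rev, sub_sub_cancel] using hzK1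
        filter_upwards [hball] with y hy
        have hy1 : ‖q.1 - y‖ ≤ 1 := by
          have := Metric.mem_ball.1 hy
          rw [dist_eq_norm, norm_sub_rev] at this
          linarith
        have := hqmax' q.1 (q.1 - y) hy1
        simp only [hg_def, sub_sub_cancel] at this
        simp only [hψ_def]
        linarith
    -- coercivity bound on p
    have hHb : H q.1 p ≤ C₀ := by
      have hfq : f q.1 ≤ f xf := hMf q.1 hq1D
      have hmul : a * (c + mv) ≤ a * u q.1 := mul_le_mul_of_nonneg_left hulow ha.le
      simp only [hC₀_def]
      linarith
    have hpR : ‖p‖ < R := by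
      by_contra h
      push_neg at h
      have := hR q.1 p h
      linarith
    have hzδ : ‖q.2‖ < δ := by
      have hK2 : R / (2 * δ) ≤ K := le_max_right _ _
      have hRle : R ≤ 2 * δ * K := by
        rw [div_le_iff₀ (by positivity)] at hK2
        linarith
      have h2K : 2 * K * ‖q.2‖ < R := by rw [← hpnorm]; exact hpR
      nlinarith
    -- conclude
    have hδapp := hδ q.1 hq1D q.2 hzK1.le p hpR.le hzδ
    have hM : u x0 - v x0 ≤ u q.1 - v (q.1 - q.2) - K * ‖q.2‖ ^ 2 := by
      have := hqmax' x0 0 (by simp)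
      simpa [hg_def] using this
    have hmul : a * (u x0 - v x0) ≤ a * (u q.1 - v (q.1 - q.2)) := by
      apply mul_le_mul_of_nonneg_left _ ha.le
      nlinarith [norm_nonneg q.2, sq_nonneg (‖q.2‖)]
    nlinarith
  -- finish
  have h0 : a * (u x0 - v x0) ≤ 0 := by
    by_contra h
    push_neg at h
    have := key (a * (u x0 - v x0) / 2) (by linarith)
    linarith
  nlinarith
end
end

section
/- Call x ∈ 𝕋^N an equilibrium point of the critical weakly coupled system if o · (min_p H₁(x,p), …, min_p H_m(x,p)) = β. If x is an equilibrium and u is a critical subsolution, then for every index i and every q ∈ ∂u_i(x) (Clarke gradient), one has H_i(x,q) = min_p H_i(x,p) and H_i(x,q) + ∑_j a_{ij} u_j(x) = β. -/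
open Set MeasureTheory Filter Topology

noncomputable section

variable {N : ℕ}

variable {m : ℕ}

/-- A (critical at α = β) subsolution of the weakly coupled system: each component is
Lipschitz, periodic, and H_i(x,p) + ∑_j a_{ij} u_j(x) ≤ α for every Clarke gradient
p ∈ ∂u_i(x) (equivalent to the viscosity notion by convexity). -/
def IsSubsol (H : Fin m → E N → Dual N → ℝ) (A : Matrix (Fin m) (Fin m) ℝ) (α : ℝ)
    (u : Fin m → E N → ℝ) : Prop :=
  (∀ i, ∃ K : NNReal, LipschitzWith K (u i)) ∧ (∀ i, ZPer (u i)) ∧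
  ∀ i x, ∀ p ∈ clarke (u i) x, H i x p + ∑ j, A i j * u j x ≤ α


/-- Auxiliary: the Clarke gradient of a Lipschitz function is nonempty. -/
lemma clarke_nonempty' {f : E N → ℝ} {K : NNReal} (hf : LipschitzWith K f) (x : E N) :
    (clarke f x).Nonempty := by
  have hd : Dense {y : E N | DifferentiableAt ℝ f y} :=
    MeasureTheory.Measure.dense_of_ae (hf.ae_differentiableAt (μ := volume))
  have hseq : ∀ n : ℕ, ∃ y, DifferentiableAt ℝ f y ∧ dist (x : E N) y < 1/(n+1) := by
    intro n
    obtain ⟨y, hy, hyd⟩ := hd.exists_dist_lt x (by positivity : (0:ℝ) < 1/(n+1))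
    exact ⟨y, hy, hyd⟩
  choose v hv hv' using hseq
  have hvx : Tendsto v atTop (𝓝 x) := by
    rw [tendsto_iff_dist_tendsto_zero]
    exact squeeze_zero (fun n => dist_nonneg) (fun n => by
      rw [dist_comm]; exact (hv' n).le) tendsto_one_div_add_atTop_nhds_zero_nat
  have hb : ∀ n, fderiv ℝ f (v n) ∈ Metric.closedBall (0 : Dual N) K := by
    intro n
    simpa [Metric.mem_closedBall] using norm_fderiv_le_of_lipschitz ℝ hf (x₀ := v n)
  obtain ⟨p, -, φ, hφ, hφt⟩ := tendsto_subseq_of_bounded Metric.isBounded_closedBall hb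
  exact ⟨p, subset_convexHull _ _ ⟨v ∘ φ, fun n => hv _, hvx.comp hφ.tendsto_atTop, hφt⟩⟩

/-- Auxiliary: a continuous superlinear function on the dual is bounded below. -/
lemma bddBelow_of_superlinear {g : Dual N → ℝ} (hc : Continuous g)
    (hsl : ∀ C : ℝ, ∃ R : ℝ, ∀ p : Dual N, R ≤ ‖p‖ → C * ‖p‖ ≤ g p) :
    BddBelow (Set.range g) := by
  obtain ⟨R, hR⟩ := hsl 0
  set R' : ℝ := max R 0 with hR'
  obtain ⟨p₀, -, hp₀⟩ := (isCompact_closedBall (0 : Dual N) R').exists_isMinOn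
    ⟨0, Metric.mem_closedBall_self (le_max_right _ _)⟩ hc.continuousOn
  refine ⟨min (g p₀) 0, ?_⟩
  rintro y ⟨p, rfl⟩
  rcases le_or_gt ‖p‖ R' with h | h
  · exact le_trans (min_le_left _ _) (hp₀ (by simpa [Metric.mem_closedBall] using h))
  · have := hR p (le_trans (le_max_left _ _) h.le)
    simpa using le_trans (min_le_right _ _) (by linarith)

/-- at an equilibrium point x (where o · min_p H(x,p) = β), every Clarke
gradient q ∈ ∂u_i(x) of a critical subsolution u realizes the minimum of H_i(x,·) and
the equation holds with equality. -/
theorem equilibrium_point_properties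
    (H : Fin m → E N → Dual N → ℝ)
    (hHc : ∀ i, Continuous fun q : E N × Dual N => H i q.1 q.2)
    (hHper : ∀ i p, ZPer fun x => H i x p)
    (hconv : ∀ i x, ConvexOn ℝ Set.univ (fun p : Dual N => H i x p))
    (hsl : ∀ i x (C : ℝ), ∃ R : ℝ, ∀ p : Dual N, R ≤ ‖p‖ → C * ‖p‖ ≤ H i x p)
    (A : Matrix (Fin m) (Fin m) ℝ)
    (hoff : ∀ i j, i ≠ j → A i j ≤ 0)
    (hrow : ∀ i, ∑ j, A i j = 0)
    (hirr : ∀ W : Finset (Fin m), W.Nonempty → W ≠ Finset.univ →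
      ∃ i ∈ W, ∃ j ∉ W, A i j < 0)
    (β : ℝ) (hβ : β = sInf {α | ∃ u, IsSubsol H A α u})
    (o : Fin m → ℝ) (ho : Matrix.vecMul o A = 0) (ho1 : ∑ i, o i = 1)
    (honn : ∀ i, 0 ≤ o i)
    (u : Fin m → E N → ℝ) (hu : IsSubsol H A β u)
    (x : E N)
    (hx : ∑ i, o i * sInf (Set.range fun p : Dual N => H i x p) = β) :
    ∀ i, ∀ q ∈ clarke (u i) x,
      H i x q = sInf (Set.range fun p : Dual N => H i x p) ∧
      H i x q + ∑ j, A i j * u j x = β := by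
  classical
  set mval : Fin _ → ℝ := fun i => sInf (Set.range fun p : Dual N => H i x p) with hm
  set Sval : Fin _ → ℝ := fun i => ∑ j, A i j * u j x with hS
  obtain ⟨hlip, hper, hsub⟩ := hu
  -- o is strictly positive
  have hoA : ∀ j, ∑ i, o i * A i j = 0 := by
    intro j
    have := congr_fun ho j
    simpa [Matrix.vecMul, dotProduct] using this
  have hopos : ∀ i, 0 < o i := by
    intro i
    rcases (honn i).lt_or_eq with h | h
    · exact h
    · exfalso
      set W : Finset (Fin _) := Finset.univ.filter (fun k => o k ≠ 0) with hW
      have hWne : W.Nonempty := by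
        by_contra hc
        rw [Finset.not_nonempty_iff_eq_empty] at hc
        have : ∀ k, o k = 0 := by
          intro k
          by_contra hk
          have : k ∈ W := by simp [hW, hk]
          simp [hc] at this
        simp [this] at ho1
      have hWuniv : W ≠ Finset.univ := by
        intro hc
        have : i ∈ W := hc ▸ Finset.mem_univ i
        simp [hW] at this
        exact this h.symm
      obtain ⟨a, haW, b, hbW, hab⟩ := hirr W hWne hWuniv
      have hoa : 0 < o a := by
        have : o a ≠ 0 := by simpa [hW] using haW
        exact lt_of_le_of_ne (honn a) (Ne.symm this)
      have hob : o b = 0 := by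
        by_contra hc
        exact hbW (by simp [hW, hc])
      have hlt : ∑ k, o k * A k b < 0 := by
        have h1 : ∀ k ∈ Finset.univ, o k * A k b ≤ 0 := by
          intro k _
          rcases eq_or_ne k b with rfl | hk
          · simp [hob]
          · exact mul_nonpos_of_nonneg_of_nonpos (honn k) (hoff k b hk)
        have h2 : o a * A a b < 0 := mul_neg_of_pos_of_neg hoa hab
        calc ∑ k, o k * A k b < ∑ k : Fin _, (0:ℝ) :=
              Finset.sum_lt_sum (fun k _ => h1 k (Finset.mem_univ k)) ⟨a, Finset.mem_univ a, by simpa using h2⟩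
          _ = 0 := by simp
      exact absurd (hoA b) (ne_of_lt hlt)
  -- sInf bounds
  have hbdd : ∀ i, BddBelow (Set.range fun p : Dual N => H i x p) := by
    intro i
    exact bddBelow_of_superlinear ((hHc i).comp (Continuous.prodMk_right x)) (hsl i x)
  have hmle : ∀ i (q : Dual N), mval i ≤ H i x q := fun i q => csInf_le (hbdd i) ⟨q, rfl⟩
  -- each component inequality
  have hineq : ∀ i, mval i + Sval i ≤ β := by
    intro i
    obtain ⟨q', hq'⟩ := clarke_nonempty' (hlip i).choose_spec x
    have := hsub i x q' hq'
    have := hmle i q'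
    simp only [hS]
    linarith [hsub i x q' hq', hmle i q']
  -- sum of o_i S_i = 0
  have hsumS : ∑ i, o i * Sval i = 0 := by
    simp only [hS, Finset.mul_sum]
    rw [Finset.sum_comm]
    have : ∀ j, ∑ i, o i * (A i j * u j x) = 0 := by
      intro j
      have : ∑ i, o i * (A i j * u j x) = (∑ i, o i * A i j) * u j x := by
        rw [Finset.sum_mul]; congr 1; ext i; ring
      rw [this, hoA j, zero_mul]
    simp [this]
  -- equality for each i
  have hkey : ∀ i, mval i + Sval i = β := by
    have hzero : ∑ i, o i * (β - (mval i + Sval i)) = 0 := by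
      have expand : ∑ i, o i * (β - (mval i + Sval i)) =
          (∑ i, o i) * β - (∑ i, o i * mval i) - (∑ i, o i * Sval i) := by
        rw [Finset.sum_mul, ← Finset.sum_sub_distrib, ← Finset.sum_sub_distrib]
        congr 1; ext i; ring
      rw [expand, ho1, hsumS]
      simp only [hm] at hx ⊢
      linarith [hx]
    intro i
    have hterm : o i * (β - (mval i + Sval i)) = 0 := by
      have := (Finset.sum_eq_zero_iff_of_nonneg (fun k _ =>
        mul_nonneg (honn k) (by linarith [hineq k]))).mp hzero i (Finset.mem_univ i)
      exact this
    have := mul_eq_zero.mp hterm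
    rcases this with h | h
    · exact absurd h (ne_of_gt (hopos i))
    · linarith
  -- conclude
  intro i q hq
  have h1 : H i x q + Sval i ≤ β := hsub i x q hq
  have h2 : mval i ≤ H i x q := hmle i q
  have h3 : mval i + Sval i = β := hkey i
  constructor
  · simp only [hm] at *; linarith
  · simp only [hS] at *; linarith
end
end
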